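/- arXiv:1401.6937 — 4 statements merged into one kernel-verified Lean document; each statement's English description precedes it below -/
import Mathlib

section
/- If the direct product G₁ × G₂ of two topological abelian groups is s-pure full (every closed subgroup is s-pure), then G₁ and G₂ are both s-pure full. -/
lemma spure_aux
    {G₁ G₂ : Type*} [AddCommGroup G₁] [TopologicalSpace G₁] [IsTopologicalAddGroup G₁] [T2Space G₁]
    [AddCommGroup G₂] [TopologicalSpace G₂] [IsTopologicalAddGroup G₂] [T2Space G₂]
    (hfull : ∀ H : AddSubgroup (G₁ × G₂), IsClosed (H : Set (G₁ × G₂)) →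
      ∀ n : ℕ, 0 < n →
        closure ((H : Set (G₁ × G₂)) ∩ {x | ∃ y, n • y = x}) = (H : Set (G₁ × G₂))) :
    ∀ H : AddSubgroup G₁, IsClosed (H : Set G₁) → ∀ n : ℕ, 0 < n →
        closure ((H : Set G₁) ∩ {x : G₁ | ∃ y : G₁, n • y = x}) = (H : Set G₁) := by
  intro H hH n hn
  have hKset : ((H.prod ⊥ : AddSubgroup (G₁ × G₂)) : Set (G₁ × G₂))
      = (H : Set G₁) ×ˢ ({0} : Set G₂) := by
    ext x
    simp only [AddSubgroup.mem_prod, AddSubgroup.mem_bot, SetLike.mem_coe, Set.mem_prod,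
      Set.mem_singleton_iff]
  have hKclosed : IsClosed ((H.prod ⊥ : AddSubgroup (G₁ × G₂)) : Set (G₁ × G₂)) := by
    rw [hKset]; exact hH.prod isClosed_singleton
  have key := hfull (H.prod ⊥) hKclosed n hn
  have hset : ((H.prod ⊥ : AddSubgroup (G₁ × G₂)) : Set (G₁ × G₂)) ∩ {x | ∃ y, n • y = x}
      = ((H : Set G₁) ∩ {x : G₁ | ∃ y : G₁, n • y = x}) ×ˢ ({0} : Set G₂) := by
    ext ⟨a, b⟩
    simp only [Set.mem_inter_iff, Set.mem_setOf_eq, Set.mem_prod, Set.mem_singleton_iff,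
      hKset, Set.mem_prod, Set.mem_singleton_iff, SetLike.mem_coe]
    constructor
    · rintro ⟨⟨ha, hb⟩, ⟨y, hy⟩⟩
      exact ⟨⟨ha, ⟨y.1, congrArg Prod.fst hy⟩⟩, hb⟩
    · rintro ⟨⟨ha, ⟨y, hy⟩⟩, hb⟩
      exact ⟨⟨ha, hb⟩, ⟨(y, 0), by simp [Prod.ext_iff, hy, hb]⟩⟩
  rw [hset, hKset, closure_prod_eq] at key
  apply Set.Subset.antisymm
  · calc closure ((H : Set G₁) ∩ {x : G₁ | ∃ y : G₁, n • y = x})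
        ⊆ closure (H : Set G₁) := closure_mono Set.inter_subset_left
    _ = (H : Set G₁) := hH.closure_eq
  · intro x hx
    have : (x, (0 : G₂)) ∈ closure ((H : Set G₁) ∩ {x : G₁ | ∃ y : G₁, n • y = x}) ×ˢ
        closure ({0} : Set G₂) := key ▸ ⟨hx, rfl⟩
    exact this.1

/-- If `G₁ × G₂` is s-pure full (every closed subgroup is s-pure), then so are `G₁` and `G₂`. -/
theorem spure_full_of_prod_spure_full
    {G₁ G₂ : Type*} [AddCommGroup G₁] [TopologicalSpace G₁] [IsTopologicalAddGroup G₁] [T2Space G₁]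
    [AddCommGroup G₂] [TopologicalSpace G₂] [IsTopologicalAddGroup G₂] [T2Space G₂]
    (hfull : ∀ H : AddSubgroup (G₁ × G₂), IsClosed (H : Set (G₁ × G₂)) →
      ∀ n : ℕ, 0 < n →
        closure ((H : Set (G₁ × G₂)) ∩ {x | ∃ y, n • y = x}) = (H : Set (G₁ × G₂))) :
    (∀ H : AddSubgroup G₁, IsClosed (H : Set G₁) → ∀ n : ℕ, 0 < n →
        closure ((H : Set G₁) ∩ {x : G₁ | ∃ y : G₁, n • y = x}) = (H : Set G₁)) ∧
    (∀ H : AddSubgroup G₂, IsClosed (H : Set G₂) → ∀ n : ℕ, 0 < n →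
        closure ((H : Set G₂) ∩ {x : G₂ | ∃ y : G₂, n • y = x}) = (H : Set G₂)) := by
  refine ⟨spure_aux hfull, spure_aux (G₂ := G₁) ?_⟩
  intro H hH n hn
  let e : (G₂ × G₁) ≃ₜ (G₁ × G₂) := Homeomorph.prodComm G₂ G₁
  have hmap : ∀ K : AddSubgroup (G₂ × G₁),
      ((K.map ((AddEquiv.prodComm : G₂ × G₁ ≃+ G₁ × G₂) : (G₂ × G₁) →+ (G₁ × G₂)) :
        AddSubgroup (G₁ × G₂)) : Set (G₁ × G₂)) = Prod.swap '' (K : Set (G₂ × G₁)) := by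
    intro K; ext x; simp [AddSubgroup.mem_map, Set.mem_image, AddEquiv.prodComm]
  have hKclosed : IsClosed ((H.map ((AddEquiv.prodComm : G₂ × G₁ ≃+ G₁ × G₂) :
      (G₂ × G₁) →+ (G₁ × G₂)) : AddSubgroup (G₁ × G₂)) : Set (G₁ × G₂)) := by
    rw [hmap]
    exact (Homeomorph.isClosed_image (Homeomorph.prodComm G₂ G₁)).mpr hH
  have key := hfull _ hKclosed n hn
  rw [hmap] at key
  have hswapdiv : Prod.swap '' ((H : Set (G₂ × G₁)) ∩ {x | ∃ y, n • y = x})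
      = (Prod.swap '' (H : Set (G₂ × G₁))) ∩ {x : G₁ × G₂ | ∃ y, n • y = x} := by
    rw [Set.image_inter Prod.swap_injective]
    congr 1
    ext ⟨a, b⟩
    constructor
    · rintro ⟨⟨c, d⟩, ⟨⟨y1, y2⟩, hy⟩, h⟩
      simp only [Prod.smul_mk, Prod.mk.injEq] at hy
      simp only [Prod.swap_prod_mk, Prod.mk.injEq] at h
      exact ⟨(y2, y1), by simp [Prod.ext_iff, hy.1, hy.2, h.1, h.2]⟩
    · rintro ⟨⟨y1, y2⟩, hy⟩
      simp only [Prod.smul_mk, Prod.mk.injEq] at hy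
      exact ⟨(b, a), ⟨(y2, y1), by simp [Prod.ext_iff, hy.1, hy.2]⟩, rfl⟩
  rw [← hswapdiv] at key
  have him : Prod.swap '' closure ((H : Set (G₂ × G₁)) ∩ {x | ∃ y, n • y = x})
      = Prod.swap '' (H : Set (G₂ × G₁)) := by
    rw [← key]
    have := (Homeomorph.prodComm G₂ G₁).image_closure
      ((H : Set (G₂ × G₁)) ∩ {x | ∃ y, n • y = x})
    simpa using this
  exact Set.image_injective.mpr Prod.swap_injective him
end

section
/- A compact Hausdorff abelian group G that is totally disconnected contains no nonzero s-pure subgroup (i.e., G is s-pure simple). -/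
/-- A compact Hausdorff totally disconnected abelian group is s-pure simple:
it contains no nonzero s-pure subgroup. -/
theorem compact_totallyDisconnected_spure_simple
    (G : Type*) [AddCommGroup G] [TopologicalSpace G] [IsTopologicalAddGroup G] [T2Space G]
    [CompactSpace G] [TotallyDisconnectedSpace G] :
    ∀ H : AddSubgroup G, IsClosed (H : Set G) →
      (∀ n : ℕ, 0 < n →
        closure ((H : Set G) ∩ {x : G | ∃ y : G, n • y = x}) = (H : Set G)) →
      H = ⊥ := by
  intro H _ hpure
  rw [AddSubgroup.eq_bot_iff_forall]
  intro x hx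
  by_contra hne
  have : TotallySeparatedSpace G := loc_compact_t2_tot_disc_iff_tot_sep.mp inferInstance
  obtain ⟨W, hWclopen, h0W, hxW⟩ :=
    exists_isClopen_of_totally_separated (show (0 : G) ≠ x from fun h => hne h.symm)
  obtain ⟨U, hUW⟩ :=
    IsTopologicalAddGroup.exist_openAddSubgroup_sub_clopen_nhds_of_zero hWclopen h0W
  have : U.toAddSubgroup.FiniteIndex := U.finiteIndex_of_finite_quotient
  set n := U.toAddSubgroup.index with hn
  have npos : 0 < n := Nat.pos_of_ne_zero AddSubgroup.FiniteIndex.index_ne_zero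
  have hsub : (H : Set G) ∩ {x : G | ∃ y : G, n • y = x} ⊆ (U : Set G) := by
    rintro z ⟨-, y, rfl⟩
    exact U.toAddSubgroup.nsmul_index_mem y
  have hclosure : closure ((H : Set G) ∩ {x : G | ∃ y : G, n • y = x}) ⊆ (U : Set G) :=
    closure_minimal hsub U.isClosed
  rw [hpure n npos] at hclosure
  exact hxW (hUW (hclosure hx))
end

section
/- In the group G of elements (x_ι) ∈ (S¹)^σ with x_ι ∈ {±1} for all but finitely many ι (σ an infinite cardinal), the two-element subgroup H = {1, y} with y_ι = -1 for all ι is closed but not s-pure: for even n, closure(H ∩ G^n) = {1}. -/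
/-- In the group `G ≤ (S¹)^σ` of tuples equal to `±1` in all but finitely many coordinates
(`σ` infinite), the two-element subgroup `H = {1, y}` with `y ι = -1` for all `ι` is closed
but not s-pure: for every even `n ≥ 1`, `closure (H ∩ Gⁿ) = {1} ≠ H`. -/
theorem subgroup_not_spure_in_circle_power
    (σ : Type*) [Infinite σ] :
    let negOne : Circle := ⟨-1, by simp [Submonoid.unitSphere]⟩
    let Gs : Set (σ → Circle) := {x | {ι : σ | x ι ≠ 1 ∧ x ι ≠ negOne}.Finite}
    let y : σ → Circle := fun _ => negOne
    let H : Set (σ → Circle) := {1, y}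
    IsClosed H ∧
      ∀ n : ℕ, 0 < n → Even n →
        closure (H ∩ {g | ∃ w ∈ Gs, w ^ n = g}) = {1} ∧
        closure (H ∩ {g | ∃ w ∈ Gs, w ^ n = g}) ≠ H := by
  intro negOne Gs y H
  have hne : negOne ≠ 1 := by
    intro h
    have : ((-1 : ℂ)) = 1 := congrArg Subtype.val h
    norm_num at this
  have hsq : negOne ^ 2 = 1 := by
    ext
    show ((-1 : ℂ)) ^ 2 = 1
    norm_num
  have hyne : y ≠ 1 := by
    obtain ⟨ι⟩ := (inferInstance : Infinite σ).nonempty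
    intro h
    exact hne (congrFun h ι)
  have hHclosed : IsClosed H := (Set.toFinite H).isClosed
  refine ⟨hHclosed, fun n hn hev => ?_⟩
  have hkey : H ∩ {g | ∃ w ∈ Gs, w ^ n = g} = {1} := by
    apply Set.eq_singleton_iff_unique_mem.2
    constructor
    · refine ⟨Or.inl rfl, (1 : σ → Circle), ?_, one_pow n⟩
      show {ι : σ | (1 : Circle) ≠ 1 ∧ (1 : Circle) ≠ negOne}.Finite
      simp
    · rintro x ⟨hxH, w, hwG, hwx⟩
      rcases hxH with h1 | hy
      · exact h1
      · exfalso
        obtain ⟨ι, hι⟩ := (Set.Infinite.nonempty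
          ((Set.infinite_univ (α := σ)).diff hwG))
        have hιok : w ι = 1 ∨ w ι = negOne := by
          by_contra hc
          push_neg at hc
          exact hι.2 ⟨hc.1, hc.2⟩
        have hpow : w ι ^ n = 1 := by
          obtain ⟨k, hk⟩ := hev
          rcases hιok with h | h
          · simp [h]
          · rw [h, hk, ← two_mul, pow_mul, hsq, one_pow]
        have : (w ^ n) ι = y ι := by rw [hwx, hy]
        rw [Pi.pow_apply, hpow] at this
        exact hne this.symm
  rw [hkey, closure_singleton]
  refine ⟨rfl, fun h => ?_⟩
  have : y ∈ ({1} : Set (σ → Circle)) := h ▸ Or.inr rfl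
  exact hyne this
end

section
/- The discrete group ℚ of rationals is not s-pure projective: for the s-pure exact sequence 0 → ℤ → ℝ → ℝ/ℤ → 0, not every continuous homomorphism ℚ → ℝ/ℤ lifts to a continuous homomorphism ℚ → ℝ. Equivalently, the induced map Hom(ℚ,ℝ) → Hom(ℚ,ℝ/ℤ) is not surjective. -/
/-! Auxiliary construction: a homomorphism `χ : C →+ ℝ/ℤ` on the subgroup
`C = (1/3)ℤ[1/2] ⊆ ℚ`, vanishing on dyadic rationals but with `χ(1/3) = 1/3`.
Extending it (by divisibility/injectivity of `ℝ/ℤ`) gives an `f : ℚ →+ ℝ/ℤ`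
that cannot lift through `π : ℝ → ℝ/ℤ`. -/

private def Pq (q : ℚ) (k : ℕ) : Prop := ∃ n : ℤ, 3 * 4 ^ k * q = (n : ℚ)

private lemma three_dvd_pow (j : ℕ) : (3 : ℤ) ∣ 4 ^ j - 1 := by
  have h : (1 : ℤ) ≡ 4 [ZMOD 3] := by decide
  simpa using (h.pow j).dvd

private lemma Pq_mono {q : ℚ} {k : ℕ} (j : ℕ) (h : Pq q k) : Pq q (k + j) := by
  obtain ⟨n, hn⟩ := h
  exact ⟨n * 4 ^ j, by push_cast; linear_combination (4 : ℚ) ^ j * hn⟩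

private lemma stab_le {q : ℚ} {k l : ℕ} (hkl : k ≤ l) (hk : Pq q k) :
    (((4 ^ k * q : ℚ) : ℝ) : AddCircle (1 : ℝ)) = (((4 ^ l * q : ℚ) : ℝ) : AddCircle (1 : ℝ)) := by
  obtain ⟨n, hn⟩ := hk
  obtain ⟨m, hm⟩ := three_dvd_pow (l - k)
  have hl : l = k + (l - k) := (Nat.add_sub_cancel' hkl).symm
  have key : (4 ^ l * q - 4 ^ k * q : ℚ) = ((n * m : ℤ) : ℚ) := by
    rw [hl]
    have hmQ : ((4 : ℚ)) ^ (l - k) - 1 = 3 * (m : ℚ) := by exact_mod_cast hm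
    push_cast
    linear_combination (((4 : ℚ) ^ (l - k) - 1) / 3) * hn + ((n : ℚ) / 3) * hmQ
  have hz : (((4 ^ l * q - 4 ^ k * q : ℚ) : ℝ) : AddCircle (1 : ℝ)) = 0 := by
    rw [AddCircle.coe_eq_zero_iff]
    exact ⟨n * m, by rw [key, zsmul_eq_mul, mul_one]; push_cast; ring⟩
  rw [Rat.cast_sub, AddCircle.coe_sub] at hz
  exact (sub_eq_zero.mp hz).symm

private lemma stab {q : ℚ} {k l : ℕ} (hk : Pq q k) (hl : Pq q l) :
    (((4 ^ k * q : ℚ) : ℝ) : AddCircle (1 : ℝ)) = (((4 ^ l * q : ℚ) : ℝ) : AddCircle (1 : ℝ)) := by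
  rcases le_total k l with h | h
  · exact stab_le h hk
  · exact (stab_le h hl).symm

private def Csub : AddSubgroup ℚ where
  carrier := {q | ∃ k, Pq q k}
  zero_mem' := ⟨0, 0, by norm_num⟩
  add_mem' := by
    rintro a b ⟨k, n, hn⟩ ⟨l, p, hp⟩
    refine ⟨k + l, n * 4 ^ l + p * 4 ^ k, ?_⟩
    push_cast
    linear_combination (4 : ℚ) ^ l * hn + (4 : ℚ) ^ k * hp
  neg_mem' := by
    rintro a ⟨k, n, hn⟩
    exact ⟨k, -n, by push_cast; linear_combination -hn⟩

private lemma mem_Csub {q : ℚ} (h : q ∈ Csub) : ∃ k, Pq q k := by exact h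

private lemma Csub_mem {q : ℚ} (h : ∃ k, Pq q k) : q ∈ Csub := by exact h

private noncomputable def chi : Csub →+ AddCircle (1 : ℝ) where
  toFun x := (((4 ^ (mem_Csub x.2).choose * (x : ℚ) : ℚ) : ℝ) : AddCircle (1 : ℝ))
  map_zero' := by
    simp
  map_add' x y := by
    have hx := (mem_Csub x.2).choose_spec
    have hy := (mem_Csub y.2).choose_spec
    have hxy := (mem_Csub (x + y).2).choose_spec
    set kx := (mem_Csub x.2).choose
    set ky := (mem_Csub y.2).choose
    have hx' : Pq (x : ℚ) (kx + ky) := Pq_mono ky hx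
    have hy' : Pq (y : ℚ) (ky + kx) := Pq_mono kx hy
    have hy'' : Pq (y : ℚ) (kx + ky) := by rwa [Nat.add_comm] at hy'
    have hsum : Pq ((x : ℚ) + (y : ℚ)) (kx + ky) := by
      obtain ⟨n, hn⟩ := hx'
      obtain ⟨p, hp⟩ := hy''
      exact ⟨n + p, by push_cast; linear_combination hn + hp⟩
    have hcoe : ((x + y : Csub) : ℚ) = (x : ℚ) + (y : ℚ) := rfl
    rw [stab hxy (hcoe ▸ hsum), stab hx hx', stab hy hy'']
    rw [hcoe]
    have : (4 ^ (kx + ky) * ((x : ℚ) + (y : ℚ)) : ℚ)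
        = 4 ^ (kx + ky) * (x : ℚ) + 4 ^ (kx + ky) * (y : ℚ) := by ring
    rw [this, Rat.cast_add, AddCircle.coe_add]

private lemma chi_eq {q : ℚ} (hq : q ∈ Csub) {k : ℕ} (hk : Pq q k) :
    chi ⟨q, hq⟩ = (((4 ^ k * q : ℚ) : ℝ) : AddCircle (1 : ℝ)) :=
  stab (mem_Csub hq).choose_spec hk

/-- The discrete group `ℚ` is not s-pure projective: not every homomorphism
`ℚ → ℝ/ℤ` (all of which are continuous, `ℚ` being discrete) lifts through the
quotient map `π : ℝ → ℝ/ℤ` of the s-pure extension `0 → ℤ → ℝ → ℝ/ℤ → 0`. -/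
theorem rat_not_spure_projective :
    ¬ ∀ f : ℚ →+ AddCircle (1 : ℝ), ∃ g : ℚ →+ ℝ,
        ∀ q : ℚ, ((g q : ℝ) : AddCircle (1 : ℝ)) = f q := by
  intro H
  -- extend `chi` to all of `ℚ` using injectivity (divisibility) of `ℝ/ℤ`
  obtain ⟨f, hf⟩ := (Module.Baer.of_divisible (AddCircle (1 : ℝ))).extension_property_addMonoidHom
    Csub.subtype Csub.subtype_injective chi
  obtain ⟨g, hg⟩ := H f
  have hfC : ∀ (q : ℚ) (hq : q ∈ Csub), f q = chi ⟨q, hq⟩ := by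
    intro q hq
    have := congrArg (fun φ => φ ⟨q, hq⟩) hf
    simpa using this
  -- dyadic rationals lie in `Csub` and are killed by `chi`
  have hPdy : ∀ k : ℕ, Pq ((1 : ℚ) / 2 ^ k) k := by
    intro k
    refine ⟨3 * 2 ^ k, ?_⟩
    have h4 : (4 : ℚ) ^ k = 2 ^ k * 2 ^ k := by rw [← mul_pow]; norm_num
    have h2 : (2 : ℚ) ^ k ≠ 0 := by positivity
    rw [h4]
    push_cast
    field_simp
  have hdy : ∀ k : ℕ, ((1 : ℚ) / 2 ^ k) ∈ Csub := fun k => Csub_mem ⟨k, hPdy k⟩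
  have hdy0 : ∀ k : ℕ, f (1 / 2 ^ k) = 0 := by
    intro k
    rw [hfC _ (hdy k), chi_eq (hdy k) (hPdy k)]
    have h2 : (2 : ℚ) ^ k ≠ 0 := by positivity
    have h1 : (4 ^ k * (1 / 2 ^ k) : ℚ) = ((2 ^ k : ℤ) : ℚ) := by
      rw [show (4 : ℚ) ^ k = 2 ^ k * 2 ^ k by rw [← mul_pow]; norm_num]
      push_cast
      field_simp
    rw [h1, AddCircle.coe_eq_zero_iff]
    exact ⟨2 ^ k, by rw [zsmul_eq_mul, mul_one]; push_cast; ring⟩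
  -- hence `g (1/2^k)` is an integer for all `k`
  have hgk : ∀ k : ℕ, ∃ m : ℤ, (m : ℝ) = g (1 / 2 ^ k) := by
    intro k
    have := hg (1 / 2 ^ k)
    rw [hdy0 k, AddCircle.coe_eq_zero_iff] at this
    obtain ⟨m, hm⟩ := this
    exact ⟨m, by simpa using hm⟩
  -- and `g 1 = 2^k * g (1/2^k)`
  have hpow : ∀ k : ℕ, g 1 = (2 ^ k : ℝ) * g (1 / 2 ^ k) := by
    intro k
    have h2 : ((2 ^ k : ℕ) • ((1 : ℚ) / 2 ^ k)) = (1 : ℚ) := by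
      rw [nsmul_eq_mul]; push_cast; field_simp
    have := map_nsmul g (2 ^ k) ((1 : ℚ) / 2 ^ k)
    rw [h2, nsmul_eq_mul] at this
    rw [this]; push_cast; ring
  -- so `g 1 = 0` by Archimedean property
  have hg1 : g 1 = 0 := by
    by_contra hne
    obtain ⟨k, hk⟩ := pow_unbounded_of_one_lt (|g 1|) (by norm_num : (1 : ℝ) < 2)
    obtain ⟨m, hm⟩ := hgk k
    have hmne : m ≠ 0 := by
      rintro rfl
      exact hne (by rw [hpow k, ← hm]; norm_num)
    have h1le : (1 : ℝ) ≤ |(m : ℝ)| := by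
      rw [← Int.cast_abs]
      exact_mod_cast Int.one_le_abs hmne
    have : (2 : ℝ) ^ k ≤ |g 1| := by
      rw [hpow k, ← hm, abs_mul, abs_pow]
      calc (2 : ℝ) ^ k = 2 ^ k * 1 := by ring
        _ ≤ |(2 : ℝ)| ^ k * |(m : ℝ)| := by
            gcongr; simp [abs_of_nonneg]
    linarith
  -- then `g (1/3) = 0`
  have hg3 : g (1 / 3) = 0 := by
    have h3 : ((3 : ℕ) • ((1 : ℚ) / 3)) = (1 : ℚ) := by norm_num
    have := map_nsmul g 3 ((1 : ℚ) / 3)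
    rw [h3, hg1, nsmul_eq_mul] at this
    have h3' : ((3 : ℕ) : ℝ) ≠ 0 := by norm_num
    field_simp at this
    linarith [this]
  -- but `f (1/3) = 1/3 ≠ 0` in `ℝ/ℤ`
  have hmem3 : ((1 : ℚ) / 3) ∈ Csub := Csub_mem ⟨0, 1, by norm_num⟩
  have hf3 : f (1 / 3) = (((1 : ℚ) / 3 : ℚ) : ℝ) := by
    rw [hfC _ hmem3, chi_eq hmem3 (⟨1, by norm_num⟩ : Pq _ 0)]
    norm_num
  have := hg (1 / 3)
  rw [hg3, hf3] at this
  have h0 : (((1 / 3 : ℚ) : ℝ) : AddCircle (1 : ℝ)) = 0 := by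
    rw [← this]; norm_num
  rw [AddCircle.coe_eq_zero_iff] at h0
  obtain ⟨n, hn⟩ := h0
  have : (3 : ℝ) * (n : ℝ) = 1 := by
    rw [zsmul_eq_mul, mul_one] at hn
    push_cast at hn ⊢
    linarith
  have : (3 * n : ℤ) = 1 := by exact_mod_cast this
  omega
end
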